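/- Let D(g) be the Drinfel'd double Lie algebra of a finite-dimensional real Lie bialgebra with structure constants (f, c) satisfying the compatibility condition, with basis {x^1,...,x^n, X_1,...,X_n} and brackets [x^i,x^j] = f^{ij}_k x^k, [X_i,X_j] = c^k_{ij} X_k, [x^i,X_j] = c^i_{jk} x^k − f^{ik}_j X_k. Then the element C = Σ_i (ι(x^i)·ι(X_i) + ι(X_i)·ι(x^i)) of the universal enveloping algebra U(D(g)), where ι : D(g) → U(D(g)) is the canonical embedding, is central in U(D(g)); i.e., C is a Casimir operator of the Drinfel'd double algebra. -/

import Mathlib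

open scoped BigOperators

private lemma aux_sum_antisym {n : ℕ} {M : Type*} [AddCommGroup M] [Module ℝ M]
    (g : Fin n → Fin n → M)
    (h : ∀ i k, g i k = - g k i) : (∑ i, ∑ k, g i k) = 0 := by
  have h2 : (∑ i, ∑ k, g i k) = - ∑ i, ∑ k, g i k := by
    calc (∑ i, ∑ k, g i k) = ∑ k, ∑ i, g i k := Finset.sum_comm
      _ = ∑ k, ∑ i, -(g k i) := Finset.sum_congr rfl fun k _ =>
            Finset.sum_congr rfl fun i _ => h i k
      _ = - ∑ k, ∑ i, g k i := by simp
  have h3 : (2:ℝ) • (∑ i, ∑ k, g i k) = 0 := by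
    rw [two_smul]; nth_rewrite 2 [h2]; simp
  simpa using h3

private lemma aux_key {U : Type*} [Ring U] (a b y A B : U)
    (hA : a * y = y * a + A) (hB : b * y = y * b + B) :
    (a * b) * y = y * (a * b) + (A * b + a * B) := by
  rw [mul_assoc, hB, mul_add, ← mul_assoc, hA]; noncomm_ring

private lemma aux_case_gen {n : ℕ} {U : Type*} [Ring U]
    (x X : Fin n → U) (y : U) (A B : Fin n → U)
    (hx : ∀ i, x i * y = y * x i + A i) (hX : ∀ i, X i * y = y * X i + B i)
    (hzero : (∑ i, (A i * X i + x i * B i + (B i * x i + X i * A i))) = 0) :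
    (∑ i, (x i * X i + X i * x i)) * y = y * ∑ i, (x i * X i + X i * x i) := by
  have hterm : ∀ i, (x i * X i + X i * x i) * y =
      y * (x i * X i + X i * x i) + (A i * X i + x i * B i + (B i * x i + X i * A i)) := by
    intro i
    rw [add_mul, aux_key (x i) (X i) y (A i) (B i) (hx i) (hX i),
        aux_key (X i) (x i) y (B i) (A i) (hX i) (hx i)]
    noncomm_ring
  calc (∑ i, (x i * X i + X i * x i)) * y
      = ∑ i, ((x i * X i + X i * x i) * y) := Finset.sum_mul ..
    _ = ∑ i, (y * (x i * X i + X i * x i) + (A i * X i + x i * B i + (B i * x i + X i * A i))) :=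
        Finset.sum_congr rfl fun i _ => hterm i
    _ = (∑ i, y * (x i * X i + X i * x i)) +
          ∑ i, (A i * X i + x i * B i + (B i * x i + X i * A i)) := Finset.sum_add_distrib
    _ = y * ∑ i, (x i * X i + X i * x i) := by rw [hzero, add_zero, Finset.mul_sum]

private lemma aux_zero_inl {n : ℕ} {U : Type*} [Ring U] [Algebra ℝ U]
    (f c : Fin n → Fin n → Fin n → ℝ) (a : Fin n)
    (hf : ∀ i j k, f i j k = - f j i k) (hc : ∀ k i j, c k i j = - c k j i)
    (x X : Fin n → U) :
    (∑ i, ((∑ k, f i a k • x k) * X i + x i * ((∑ k, f a k i • X k) - ∑ k, c a i k • x k) +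
      (((∑ k, f a k i • X k) - ∑ k, c a i k • x k) * x i +
        X i * (∑ k, f i a k • x k)))) = 0 := by
  have hexp : (∑ i, ((∑ k, f i a k • x k) * X i +
      x i * ((∑ k, f a k i • X k) - ∑ k, c a i k • x k) +
      (((∑ k, f a k i • X k) - ∑ k, c a i k • x k) * x i + X i * (∑ k, f i a k • x k)))) =
      ∑ i, ∑ k, (f i a k • (x k * X i) +
        (f a k i • (x i * X k) - c a i k • (x i * x k)) +
        ((f a k i • (X k * x i) - c a i k • (x k * x i)) + f i a k • (X i * x k))) := by
    refine Finset.sum_congr rfl fun i _ => ?_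
    simp only [Finset.sum_mul, Finset.mul_sum, smul_mul_assoc, mul_smul_comm, mul_sub, sub_mul,
      ← Finset.sum_sub_distrib, ← Finset.sum_add_distrib]
  rw [hexp]
  refine aux_sum_antisym _ fun i k => ?_
  rw [hf i a k, hf a k i, hc a i k]
  module

private lemma aux_zero_inr {n : ℕ} {U : Type*} [Ring U] [Algebra ℝ U]
    (f c : Fin n → Fin n → Fin n → ℝ) (a : Fin n)
    (hf : ∀ i j k, f i j k = - f j i k) (hc : ∀ k i j, c k i j = - c k j i)
    (x X : Fin n → U) :
    (∑ i, (((∑ k, c i a k • x k) - ∑ k, f i k a • X k) * X i +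
      x i * (∑ k, c k i a • X k) +
      ((∑ k, c k i a • X k) * x i +
        X i * ((∑ k, c i a k • x k) - ∑ k, f i k a • X k)))) = 0 := by
  have hexp : (∑ i, (((∑ k, c i a k • x k) - ∑ k, f i k a • X k) * X i +
      x i * (∑ k, c k i a • X k) +
      ((∑ k, c k i a • X k) * x i +
        X i * ((∑ k, c i a k • x k) - ∑ k, f i k a • X k)))) =
      ∑ i, ∑ k, ((c i a k • (x k * X i) - f i k a • (X k * X i)) +
        c k i a • (x i * X k) +
        (c k i a • (X k * x i) + (c i a k • (X i * x k) - f i k a • (X i * X k)))) := by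
    refine Finset.sum_congr rfl fun i _ => ?_
    simp only [Finset.sum_mul, Finset.mul_sum, smul_mul_assoc, mul_smul_comm, mul_sub, sub_mul,
      ← Finset.sum_sub_distrib, ← Finset.sum_add_distrib]
  rw [hexp]
  refine aux_sum_antisym _ fun i k => ?_
  rw [hc i a k, hc k i a, hf i k a]
  module

theorem double_casimir_central (n : ℕ) (f c : Fin n → Fin n → Fin n → ℝ)
    (hcomp : ∀ a b i j : Fin n,
      (∑ k, f a b k * c k i j) =
        ∑ k, (f a k i * c b k j + f k b i * c a k j + f a k j * c b i k +
          f k b j * c a i k))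
    (L : Type) [LieRing L] [LieAlgebra ℝ L]
    (b : Module.Basis (Fin n ⊕ Fin n) ℝ L)
    (hxx : ∀ i j, ⁅b (Sum.inl i), b (Sum.inl j)⁆ = ∑ k, f i j k • b (Sum.inl k))
    (hXX : ∀ i j, ⁅b (Sum.inr i), b (Sum.inr j)⁆ = ∑ k, c k i j • b (Sum.inr k))
    (hxX : ∀ i j, ⁅b (Sum.inl i), b (Sum.inr j)⁆ =
      (∑ k, c i j k • b (Sum.inl k)) - ∑ k, f i k j • b (Sum.inr k)) :
    ∀ u : UniversalEnvelopingAlgebra ℝ L,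
      (∑ i : Fin n,
        (UniversalEnvelopingAlgebra.ι ℝ (b (Sum.inl i)) *
            UniversalEnvelopingAlgebra.ι ℝ (b (Sum.inr i)) +
          UniversalEnvelopingAlgebra.ι ℝ (b (Sum.inr i)) *
            UniversalEnvelopingAlgebra.ι ℝ (b (Sum.inl i)))) * u =
      u * (∑ i : Fin n,
        (UniversalEnvelopingAlgebra.ι ℝ (b (Sum.inl i)) *
            UniversalEnvelopingAlgebra.ι ℝ (b (Sum.inr i)) +
          UniversalEnvelopingAlgebra.ι ℝ (b (Sum.inr i)) *
            UniversalEnvelopingAlgebra.ι ℝ (b (Sum.inl i)))) := by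
  clear hcomp
  letI : LieRing (UniversalEnvelopingAlgebra ℝ L) := LieRing.ofAssociativeRing
  letI : LieAlgebra ℝ (UniversalEnvelopingAlgebra ℝ L) := LieAlgebra.ofAssociativeAlgebra
  have hf_anti : ∀ i j k, f i j k = - f j i k := by
    intro i j k
    have h : (∑ m, f i j m • b (Sum.inl m)) = - ∑ m, f j i m • b (Sum.inl m) := by
      rw [← hxx, ← hxx, ← lie_skew]
    have h2 := congrArg (fun z => b.repr z (Sum.inl k)) h
    simpa [Finsupp.single_apply, Finset.sum_ite_eq'] using h2
  have hc_anti : ∀ k i j, c k i j = - c k j i := by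
    intro k i j
    have h : (∑ m, c m i j • b (Sum.inr m)) = - ∑ m, c m j i • b (Sum.inr m) := by
      rw [← hXX, ← hXX, ← lie_skew]
    have h2 := congrArg (fun z => b.repr z (Sum.inr k)) h
    simpa [Finsupp.single_apply, Finset.sum_ite_eq'] using h2
  have hcomm : ∀ u v : L, UniversalEnvelopingAlgebra.ι ℝ u * UniversalEnvelopingAlgebra.ι ℝ v =
      UniversalEnvelopingAlgebra.ι ℝ v * UniversalEnvelopingAlgebra.ι ℝ u +
      UniversalEnvelopingAlgebra.ι ℝ ⁅u, v⁆ := by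
    intro u v
    have h := LieHom.map_lie (UniversalEnvelopingAlgebra.ι ℝ (L := L)) (x := u) (y := v)
    rw [Ring.lie_def] at h
    rw [h]; abel
  have ιsum : ∀ {α : Type} (t : Finset α) (g : α → L),
      UniversalEnvelopingAlgebra.ι ℝ (∑ k ∈ t, g k) =
        ∑ k ∈ t, UniversalEnvelopingAlgebra.ι ℝ (g k) := by
    intro α t g
    exact map_sum (UniversalEnvelopingAlgebra.ι ℝ (L := L)).toLinearMap g t
  set E : UniversalEnvelopingAlgebra ℝ L := ∑ i : Fin n,
    (UniversalEnvelopingAlgebra.ι ℝ (b (Sum.inl i)) *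
        UniversalEnvelopingAlgebra.ι ℝ (b (Sum.inr i)) +
      UniversalEnvelopingAlgebra.ι ℝ (b (Sum.inr i)) *
        UniversalEnvelopingAlgebra.ι ℝ (b (Sum.inl i))) with hE
  have hbas : ∀ s, E * UniversalEnvelopingAlgebra.ι ℝ (b s) =
      UniversalEnvelopingAlgebra.ι ℝ (b s) * E := by
    intro s
    rw [hE]
    rcases s with a | a
    · refine aux_case_gen _ _ _
        (fun i => ∑ k, f i a k • UniversalEnvelopingAlgebra.ι ℝ (b (Sum.inl k)))
        (fun i => (∑ k, f a k i • UniversalEnvelopingAlgebra.ι ℝ (b (Sum.inr k))) -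
          ∑ k, c a i k • UniversalEnvelopingAlgebra.ι ℝ (b (Sum.inl k)))
        (fun i => ?_) (fun i => ?_)
        (aux_zero_inl f c a hf_anti hc_anti _ _)
      · rw [hcomm, hxx i a, ιsum]
        simp only [map_smul]
      · rw [hcomm]
        have hbr : ⁅b (Sum.inr i), b (Sum.inl a)⁆ =
            (∑ k, f a k i • b (Sum.inr k)) - ∑ k, c a i k • b (Sum.inl k) := by
          rw [← lie_skew, hxX a i]; abel
        rw [hbr, map_sub, ιsum, ιsum]
        simp only [map_smul]
    · refine aux_case_gen _ _ _
        (fun i => (∑ k, c i a k • UniversalEnvelopingAlgebra.ι ℝ (b (Sum.inl k))) -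
          ∑ k, f i k a • UniversalEnvelopingAlgebra.ι ℝ (b (Sum.inr k)))
        (fun i => ∑ k, c k i a • UniversalEnvelopingAlgebra.ι ℝ (b (Sum.inr k)))
        (fun i => ?_) (fun i => ?_)
        (aux_zero_inr f c a hf_anti hc_anti _ _)
      · rw [hcomm, hxX i a, map_sub, ιsum, ιsum]
        simp only [map_smul]
      · rw [hcomm, hXX i a, ιsum]
        simp only [map_smul]
  have hgen : ∀ z : L, E * UniversalEnvelopingAlgebra.ι ℝ z =
      UniversalEnvelopingAlgebra.ι ℝ z * E := by
    intro z
    have hz : UniversalEnvelopingAlgebra.ι ℝ z =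
        ∑ s, b.repr z s • UniversalEnvelopingAlgebra.ι ℝ (b s) := by
      conv_lhs => rw [← Module.Basis.sum_repr b z]
      rw [ιsum]
      simp only [map_smul]
    rw [hz, Finset.mul_sum, Finset.sum_mul]
    exact Finset.sum_congr rfl fun s _ => by rw [mul_smul_comm, smul_mul_assoc, hbas s]
  intro u
  obtain ⟨t, rfl⟩ : ∃ t, UniversalEnvelopingAlgebra.mkAlgHom ℝ L t = u :=
    RingCon.mkₐ_surjective (α := ℝ) _ u
  induction t using TensorAlgebra.induction with
  | algebraMap r =>
      rw [AlgHom.commutes]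
      exact (Algebra.commutes r E).symm
  | ι m =>
      have h := hgen m
      rwa [UniversalEnvelopingAlgebra.ι_apply] at h
  | mul p q hp hq =>
      rw [map_mul, ← mul_assoc, hp, mul_assoc, hq, mul_assoc]
  | add p q hp hq =>
      rw [map_add, mul_add, add_mul, hp, hq]
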